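/- Let G be a simple graph on n vertices, let i be a vertex of G, and let k be a nonnegative integer. Then there exists a matrix A ∈ 𝒮(G) with i-nullity pair (k,k) if and only if there exists a matrix A' ∈ 𝒮(G) with i-nullity pair (k+1,k). -/

import Mathlib

open Matrix

/-- The nullity of a square real matrix: the dimension of its kernel. -/
noncomputable def nullity {V : Type*} [Fintype V] (A : Matrix V V ℝ) : ℕ :=
  Module.finrank ℝ (LinearMap.ker A.mulVecLin)

/-- The principal submatrix of `A` obtained by deleting row and column `i`. -/
def deleteRC {V : Type*} (A : Matrix V V ℝ) (i : V) :
    Matrix {v : V // v ≠ i} {v : V // v ≠ i} ℝ :=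
  A.submatrix (fun v => (v : V)) (fun v => (v : V))

/-- `A` has the `i`-strong nullity interlacing property. -/
def HasSNIP {V : Type*} [Fintype V] [DecidableEq V] (A : Matrix V V ℝ) (i : V) : Prop :=
  ∀ X : Matrix V V ℝ, X.IsSymm → A.hadamard X = 0 →
    (1 : Matrix V V ℝ).hadamard X = 0 →
    (∀ r, r ≠ i → ∀ c, (A * X) r c = 0) → X = 0

/-- `A` has the strong Arnold property. -/
def HasSAP {V : Type*} [Fintype V] [DecidableEq V] (A : Matrix V V ℝ) : Prop :=
  ∀ X : Matrix V V ℝ, X.IsSymm → A.hadamard X = 0 →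
    (1 : Matrix V V ℝ).hadamard X = 0 → A * X = 0 → X = 0

/-- `A` belongs to `𝒮(G)`. -/
def InSG {V : Type*} (G : SimpleGraph V) (A : Matrix V V ℝ) : Prop :=
  A.IsSymm ∧ ∀ u v : V, u ≠ v → (A u v ≠ 0 ↔ G.Adj u v)

/-- `(G,i)` allows the nullity pair `(k,l)`. -/
def Allows {V : Type*} [Fintype V] [DecidableEq V] (G : SimpleGraph V) (i : V)
    (k l : ℕ) : Prop :=
  ∃ A : Matrix V V ℝ, InSG G A ∧ nullity A = k ∧ nullity (deleteRC A i) = l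

/-- `(G,i)` allows the nullity pair `(k,l)` with the SNIP. -/
def AllowsSNIP {V : Type*} [Fintype V] [DecidableEq V] (G : SimpleGraph V) (i : V)
    (k l : ℕ) : Prop :=
  ∃ A : Matrix V V ℝ, InSG G A ∧ nullity A = k ∧ nullity (deleteRC A i) = l ∧ HasSNIP A i

set_option linter.unusedSectionVars false

section Aux

lemma symm_perp_ker_mem_range {m : Type*} [Fintype m] [DecidableEq m]
    (M : Matrix m m ℝ) (hM : M.IsSymm) (b : m → ℝ)
    (hb : ∀ z, M.mulVec z = 0 → b ⬝ᵥ z = 0) : ∃ y, M.mulVec y = b := by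
  have hherm : M.IsHermitian := by
    rw [Matrix.IsHermitian, conjTranspose_eq_transpose_of_trivial]; exact hM
  set T := Matrix.toEuclideanLin M with hT
  have hsym : T.IsSymmetric := Matrix.isHermitian_iff_isSymmetric.mp hherm
  have hforward : ∀ x : EuclideanSpace ℝ m, T x = M.mulVec x := fun x => rfl
  have hinner : ∀ x y : EuclideanSpace ℝ m, (inner ℝ x y : ℝ) = x ⬝ᵥ y := by
    intro x y
    simp [PiLp.inner_apply, dotProduct, mul_comm]
  have hperp : (LinearMap.range T)ᗮ = LinearMap.ker T := by
    ext v
    constructor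
    · intro hv
      have h1 : ∀ u, (inner ℝ (T v) u : ℝ) = 0 := by
        intro u
        have := (Submodule.mem_orthogonal _ v).mp hv (T u) ⟨u, rfl⟩
        rw [hsym v u, real_inner_comm]
        exact this
      have := h1 (T v)
      rw [inner_self_eq_zero] at this
      simpa [LinearMap.mem_ker] using this
    · intro hv
      rw [Submodule.mem_orthogonal]
      rintro u ⟨w, rfl⟩
      rw [hsym w v]
      simp [LinearMap.mem_ker.mp hv]
  set b' : EuclideanSpace ℝ m := (WithLp.equiv 2 (m → ℝ)).symm b with hb'
  have hbmem : b' ∈ (LinearMap.ker T)ᗮ := by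
    rw [Submodule.mem_orthogonal]
    intro z hz
    rw [hinner]
    have hz0 : M.mulVec z = 0 := by have := congrArg WithLp.ofLp (LinearMap.mem_ker.mp hz); exact this
    have := hb z hz0
    rw [dotProduct_comm] at this
    exact this
  rw [← hperp, Submodule.orthogonal_orthogonal] at hbmem
  obtain ⟨y, hy⟩ := hbmem
  exact ⟨y, by have := congrArg WithLp.ofLp hy; exact this⟩

variable {V : Type*} [Fintype V] [DecidableEq V]

/-- Extension by zero at `i`, as a linear map. -/
def extLin (i : V) : ({v : V // v ≠ i} → ℝ) →ₗ[ℝ] (V → ℝ) where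
  toFun z := fun v => if h : v = i then 0 else z ⟨v, h⟩
  map_add' z w := by ext v; by_cases h : v = i <;> simp [h]
  map_smul' c z := by ext v; by_cases h : v = i <;> simp [h]

lemma extLin_apply_ne (i : V) (z : {v : V // v ≠ i} → ℝ) (s : {v : V // v ≠ i}) :
    extLin i z ↑s = z s := by
  simp [extLin, s.prop]

lemma extLin_apply_i (i : V) (z : {v : V // v ≠ i} → ℝ) : extLin i z i = 0 := by
  simp [extLin]

lemma mulVec_split (A : Matrix V V ℝ) (i : V) (x : V → ℝ) (v : V) :
    A.mulVec x v = (∑ s : {u : V // u ≠ i}, A v ↑s * x ↑s) + A v i * x i := by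
  have h1 : ∑ u ∈ Finset.univ.erase i, A v u * x u
      = ∑ s : {u : V // u ≠ i}, A v ↑s * x ↑s :=
    Finset.sum_subtype (Finset.univ.erase i) (fun u => by simp [Finset.mem_erase]) _
  have h2 := Finset.sum_erase_add Finset.univ (fun u => A v u * x u) (Finset.mem_univ i)
  calc A.mulVec x v = ∑ u, A v u * x u := rfl
    _ = (∑ u ∈ Finset.univ.erase i, A v u * x u) + A v i * x i := h2.symm
    _ = _ := by rw [h1]

lemma deleteRC_mulVec (A : Matrix V V ℝ) (i : V) (z : {v : V // v ≠ i} → ℝ)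
    (s : {v : V // v ≠ i}) :
    (deleteRC A i).mulVec z s = ∑ s' : {v : V // v ≠ i}, A ↑s ↑s' * z s' := rfl

lemma mulVec_ext (A : Matrix V V ℝ) (i : V) (z : {v : V // v ≠ i} → ℝ) (v : V) :
    A.mulVec (extLin i z) v = ∑ s : {u : V // u ≠ i}, A v ↑s * z s := by
  rw [mulVec_split A i _ v, extLin_apply_i]
  simp only [extLin_apply_ne, mul_zero, add_zero]

lemma res_mem_ker (i : V) (A : Matrix V V ℝ) (x : V → ℝ)
    (hx : A.mulVec x = 0) (hxi : x i = 0) :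
    (deleteRC A i).mulVec (fun s => x ↑s) = 0 := by
  funext s
  rw [deleteRC_mulVec]
  have := congrFun hx ↑s
  rw [mulVec_split A i x ↑s, hxi, mul_zero, add_zero] at this
  simpa using this

lemma finrank_inf_le (i : V) (A : Matrix V V ℝ) :
    Module.finrank ℝ ↥(LinearMap.ker A.mulVecLin ⊓
        LinearMap.ker (LinearMap.proj i : (V → ℝ) →ₗ[ℝ] ℝ))
      ≤ nullity (deleteRC A i) := by
  set P := LinearMap.ker A.mulVecLin ⊓
      LinearMap.ker (LinearMap.proj i : (V → ℝ) →ₗ[ℝ] ℝ) with hP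
  have hmem : ∀ p : ↥P, (fun s => p.val ↑s : {v : V // v ≠ i} → ℝ) ∈
      LinearMap.ker (deleteRC A i).mulVecLin := by
    intro p
    rw [LinearMap.mem_ker, Matrix.mulVecLin_apply]
    exact res_mem_ker i A p.val (by simpa using p.2.1) (by simpa using p.2.2)
  let f : ↥P →ₗ[ℝ] ↥(LinearMap.ker (deleteRC A i).mulVecLin) :=
    LinearMap.codRestrict _
      ((LinearMap.funLeft ℝ ℝ (Subtype.val : {v : V // v ≠ i} → V)).comp P.subtype) hmem
  have hinj : Function.Injective f := by
    intro a b hab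
    have h1 : ∀ s : {v : V // v ≠ i}, a.val ↑s = b.val ↑s := by
      intro s
      exact congrFun (congrArg Subtype.val hab) s
    apply Subtype.ext
    funext v
    by_cases hv : v = i
    · subst hv
      have ha : a.val v = 0 := by simpa using a.2.2
      have hb : b.val v = 0 := by simpa using b.2.2
      rw [ha, hb]
    · exact h1 ⟨v, hv⟩
  exact LinearMap.finrank_le_finrank_of_injective hinj

lemma finrank_ker_comp_proj (i : V) (P : Submodule ℝ (V → ℝ)) :
    Module.finrank ℝ ↥(LinearMap.ker ((LinearMap.proj i : (V → ℝ) →ₗ[ℝ] ℝ).comp P.subtype))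
      = Module.finrank ℝ ↥(P ⊓ LinearMap.ker (LinearMap.proj i : (V → ℝ) →ₗ[ℝ] ℝ)) := by
  rw [LinearMap.ker_comp]
  rw [← Submodule.map_comap_subtype]
  exact LinearEquiv.finrank_eq
    (Submodule.equivMapOfInjective P.subtype P.injective_subtype _)

lemma finrank_le_inf_add_one (i : V) (P : Submodule ℝ (V → ℝ)) :
    Module.finrank ℝ ↥P ≤ Module.finrank ℝ
      ↥(P ⊓ LinearMap.ker (LinearMap.proj i : (V → ℝ) →ₗ[ℝ] ℝ)) + 1 := by
  have h := LinearMap.finrank_range_add_finrank_ker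
    ((LinearMap.proj i : (V → ℝ) →ₗ[ℝ] ℝ).comp P.subtype)
  rw [finrank_ker_comp_proj] at h
  have hr : Module.finrank ℝ
      ↥(LinearMap.range ((LinearMap.proj i : (V → ℝ) →ₗ[ℝ] ℝ).comp P.subtype)) ≤ 1 := by
    have := Submodule.finrank_le
      (LinearMap.range ((LinearMap.proj i : (V → ℝ) →ₗ[ℝ] ℝ).comp P.subtype))
    simpa [Module.finrank_self] using this
  omega

lemma finrank_inf_add_one (i : V) (P : Submodule ℝ (V → ℝ)) (x : V → ℝ)
    (hx : x ∈ P) (hxi : x i ≠ 0) :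
    Module.finrank ℝ ↥(P ⊓ LinearMap.ker (LinearMap.proj i : (V → ℝ) →ₗ[ℝ] ℝ)) + 1
      = Module.finrank ℝ ↥P := by
  have h := LinearMap.finrank_range_add_finrank_ker
    ((LinearMap.proj i : (V → ℝ) →ₗ[ℝ] ℝ).comp P.subtype)
  rw [finrank_ker_comp_proj] at h
  have hr : LinearMap.range ((LinearMap.proj i : (V → ℝ) →ₗ[ℝ] ℝ).comp P.subtype) = ⊤ := by
    rw [eq_top_iff]
    intro a _
    refine ⟨⟨(a / x i) • x, P.smul_mem _ hx⟩, ?_⟩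
    simp [div_mul_cancel₀, hxi]
  rw [hr, finrank_top, Module.finrank_self] at h
  omega

lemma mulVec_add_smul_std (A : Matrix V V ℝ) (i : V) (t : ℝ) (x : V → ℝ) :
    (A + t • Matrix.single i i (1:ℝ)).mulVec x
      = A.mulVec x + (t * x i) • (Pi.single i 1 : V → ℝ) := by
  funext v
  simp only [Matrix.add_mulVec, Matrix.smul_mulVec, Pi.add_apply, Pi.smul_apply]
  congr 1
  simp [Matrix.mulVec, dotProduct, Matrix.single,
    Matrix.of_apply, ite_and, Pi.single_apply, Finset.sum_ite_eq, mul_comm, eq_comm]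

lemma deleteRC_add_smul_std (A : Matrix V V ℝ) (i : V) (t : ℝ) :
    deleteRC (A + t • Matrix.single i i (1:ℝ)) i = deleteRC A i := by
  ext s s'
  simp only [deleteRC, Matrix.submatrix_apply, Matrix.add_apply, Matrix.smul_apply]
  rw [Matrix.single_apply_of_ne]
  · simp
  · intro ⟨h1, _⟩
    exact s.prop h1.symm

lemma isSymm_add_smul_std (A : Matrix V V ℝ) (i : V) (t : ℝ) (hA : A.IsSymm) :
    (A + t • Matrix.single i i (1:ℝ)).IsSymm := by
  rw [Matrix.IsSymm] at hA ⊢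
  rw [Matrix.transpose_add, hA, Matrix.transpose_smul]
  congr 2
  ext u v
  by_cases h : u = i ∧ v = i
  · obtain ⟨h1, h2⟩ := h; subst h1; subst h2; rfl
  · rw [Matrix.transpose_apply,
      Matrix.single_apply_of_ne (i := i) (j := i) (i' := v) (j' := u) (c := (1:ℝ)) (fun ⟨a, b⟩ => h ⟨b.symm, a.symm⟩),
      Matrix.single_apply_of_ne (i := i) (j := i) (i' := u) (j' := v) (c := (1:ℝ)) (fun ⟨a, b⟩ => h ⟨a.symm, b.symm⟩)]

lemma InSG_add_smul_std {G : SimpleGraph V} {A : Matrix V V ℝ} (hG : InSG G A)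
    (i : V) (t : ℝ) : InSG G (A + t • Matrix.single i i (1:ℝ)) := by
  refine ⟨isSymm_add_smul_std A i t hG.1, fun u v huv => ?_⟩
  have : (A + t • Matrix.single i i (1:ℝ)) u v = A u v := by
    simp only [Matrix.add_apply, Matrix.smul_apply]
    rw [Matrix.single_apply_of_ne]
    · simp
    · intro ⟨h1, h2⟩
      exact huv (h1.symm.trans h2)
  rw [this]
  exact hG.2 u v huv

lemma isSymm_deleteRC {A : Matrix V V ℝ} (hA : A.IsSymm) (i : V) :
    (deleteRC A i).IsSymm := by
  rw [Matrix.IsSymm]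
  ext s s'
  exact hA.apply ↑s ↑s'

lemma ker_vanish_of_kk (i : V) (A : Matrix V V ℝ) (hA : A.IsSymm) {k : ℕ}
    (h1 : nullity A = k) (h2 : nullity (deleteRC A i) = k) :
    ∀ x ∈ LinearMap.ker A.mulVecLin, x i = 0 := by
  by_contra hcon
  push_neg at hcon
  obtain ⟨x, hx, hxi⟩ := hcon
  have hx' : A.mulVec x = 0 := by simpa using hx
  set B := deleteRC A i with hB
  have hBsymm : B.IsSymm := isSymm_deleteRC hA i
  have hrow : ∀ s : {v : V // v ≠ i},
      B.mulVec (fun s' => x ↑s') s = -(A ↑s i * x i) := by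
    intro s
    have h0 := congrFun hx' ↑s
    rw [mulVec_split A i x ↑s] at h0
    rw [hB, deleteRC_mulVec]
    change _ = (0:ℝ) at h0
    linarith [h0]
  have key : ∀ z ∈ LinearMap.ker B.mulVecLin,
      (∑ s : {v : V // v ≠ i}, A i ↑s * z s) = 0 := by
    intro z hz
    have hz' : B.mulVec z = 0 := by simpa using hz
    have hdot : B.mulVec (fun s' => x ↑s') ⬝ᵥ z = 0 := by
      have h0 : (fun s' : {v : V // v ≠ i} => x ↑s') ⬝ᵥ B.mulVec z = 0 := by
        rw [hz']; simp
      rw [Matrix.dotProduct_mulVec] at h0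
      rw [← Matrix.vecMul_transpose, hBsymm]
      exact h0
    have h3 : ∑ s : {v : V // v ≠ i}, -(A ↑s i * x i) * z s = 0 := by
      rw [← hdot]
      exact (Finset.sum_congr rfl (fun s _ => by rw [hrow s])).symm
    have h4 : x i * (∑ s : {v : V // v ≠ i}, A i ↑s * z s)
        = ∑ s : {v : V // v ≠ i}, -(-(A ↑s i * x i) * z s) := by
      rw [Finset.mul_sum]
      exact Finset.sum_congr rfl (fun s _ => by rw [← hA.apply i ↑s]; ring)
    rw [Finset.sum_neg_distrib, h3, neg_zero] at h4
    rcases mul_eq_zero.mp h4 with h | h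
    · exact absurd h hxi
    · exact h
  -- every kernel vector of B extends by zero to a kernel vector of A
  have hextmem : ∀ z ∈ LinearMap.ker B.mulVecLin,
      extLin i z ∈ LinearMap.ker A.mulVecLin := by
    intro z hz
    rw [LinearMap.mem_ker, Matrix.mulVecLin_apply]
    funext v
    rw [mulVec_ext A i z v]
    by_cases hv : v = i
    · subst hv
      simpa using key z hz
    · have hz' : B.mulVec z = 0 := by simpa using hz
      have := congrFun hz' ⟨v, hv⟩
      rw [hB, deleteRC_mulVec] at this
      simpa using this
  -- build an injection (ker B) × ℝ → ker A
  let g0 : (↥(LinearMap.ker B.mulVecLin) × ℝ) →ₗ[ℝ] (V → ℝ) :=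
    ((extLin i).comp (LinearMap.ker B.mulVecLin).subtype).coprod
      (LinearMap.toSpanSingleton ℝ (V → ℝ) x)
  have hg0mem : ∀ p, g0 p ∈ LinearMap.ker A.mulVecLin := by
    rintro ⟨z, a⟩
    exact Submodule.add_mem _ (hextmem z.val z.2) (Submodule.smul_mem _ a hx)
  let g : (↥(LinearMap.ker B.mulVecLin) × ℝ) →ₗ[ℝ] ↥(LinearMap.ker A.mulVecLin) :=
    LinearMap.codRestrict _ g0 hg0mem
  have hginj : Function.Injective g := by
    rw [injective_iff_map_eq_zero]
    rintro ⟨z, a⟩ hza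
    have hval : extLin i z.val + a • x = 0 := by
      have := congrArg Subtype.val hza
      simpa [g, g0, LinearMap.coprod_apply, LinearMap.toSpanSingleton_apply] using this
    have ha : a = 0 := by
      have := congrFun hval i
      simp only [Pi.add_apply, Pi.smul_apply, Pi.zero_apply, smul_eq_mul,
        extLin_apply_i, zero_add] at this
      rcases mul_eq_zero.mp this with h | h
      · exact h
      · exact absurd h hxi
    subst ha
    have hz0 : z = 0 := by
      apply Subtype.ext
      funext s
      have := congrFun hval ↑s
      rw [← extLin_apply_ne i z.val s]
      simpa using this
    simp [hz0]
  have hle := LinearMap.finrank_le_finrank_of_injective hginj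
  rw [Module.finrank_prod, Module.finrank_self] at hle
  have e1 : Module.finrank ℝ ↥(LinearMap.ker B.mulVecLin) = k := h2
  have e2 : Module.finrank ℝ ↥(LinearMap.ker A.mulVecLin) = k := h1
  omega

lemma kk_exists (i : V) (A : Matrix V V ℝ) (hA : A.IsSymm) {k : ℕ}
    (h1 : nullity A = k) (h2 : nullity (deleteRC A i) = k) :
    ∃ t : ℝ, nullity (A + t • Matrix.single i i (1:ℝ)) = k + 1 := by
  have hvan := ker_vanish_of_kk i A hA h1 h2
  set B := deleteRC A i with hB
  have hBsymm : B.IsSymm := isSymm_deleteRC hA i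
  -- the restriction map ker A → ker B is surjective
  have hmem : ∀ p : ↥(LinearMap.ker A.mulVecLin),
      (fun s => p.val ↑s : {v : V // v ≠ i} → ℝ) ∈ LinearMap.ker B.mulVecLin := by
    intro p
    rw [LinearMap.mem_ker, Matrix.mulVecLin_apply]
    exact res_mem_ker i A p.val p.2 (hvan p.val p.2)
  let r : ↥(LinearMap.ker A.mulVecLin) →ₗ[ℝ] ↥(LinearMap.ker B.mulVecLin) :=
    LinearMap.codRestrict _
      ((LinearMap.funLeft ℝ ℝ (Subtype.val : {v : V // v ≠ i} → V)).comp
        (LinearMap.ker A.mulVecLin).subtype) hmem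
  have hrinj : Function.Injective r := by
    rw [injective_iff_map_eq_zero]
    intro p hp
    apply Subtype.ext
    funext v
    by_cases hv : v = i
    · subst hv; exact hvan p.val p.2
    · have := congrFun (congrArg Subtype.val hp) ⟨v, hv⟩
      exact this
  have hrsurj : LinearMap.range r = ⊤ := by
    apply Submodule.eq_top_of_finrank_eq
    have hh := LinearMap.finrank_range_add_finrank_ker r
    rw [LinearMap.ker_eq_bot.mpr hrinj, finrank_bot] at hh
    have e1 : Module.finrank ℝ ↥(LinearMap.ker A.mulVecLin) = k := h1
    have e2 : Module.finrank ℝ ↥(LinearMap.ker B.mulVecLin) = k := h2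
    omega
  -- row i is orthogonal to ker B
  have hperp : ∀ z, B.mulVec z = 0 → (fun s : {v : V // v ≠ i} => A ↑s i) ⬝ᵥ z = 0 := by
    intro z hz
    have hzmem : (⟨z, by simpa using hz⟩ : ↥(LinearMap.ker B.mulVecLin)) ∈
        LinearMap.range r := hrsurj ▸ Submodule.mem_top
    obtain ⟨p, hp⟩ := hzmem
    have hres : ∀ s : {v : V // v ≠ i}, p.val ↑s = z s := by
      intro s
      exact congrFun (congrArg Subtype.val hp) s
    have hp0 : A.mulVec p.val = 0 := p.2
    have hi := congrFun hp0 i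
    rw [mulVec_split A i p.val i, hvan p.val p.2, mul_zero, add_zero] at hi
    change _ = (0:ℝ) at hi
    calc (fun s : {v : V // v ≠ i} => A ↑s i) ⬝ᵥ z
        = ∑ s : {v : V // v ≠ i}, A ↑s i * z s := rfl
      _ = ∑ s : {v : V // v ≠ i}, A i ↑s * p.val ↑s := by
          refine Finset.sum_congr rfl (fun s _ => ?_)
          rw [hA.apply i ↑s, hres s]
      _ = 0 := hi
  -- solve B y = (column i of A)
  obtain ⟨y, hy⟩ := symm_perp_ker_mem_range B hBsymm
    (fun s : {v : V // v ≠ i} => A ↑s i) hperp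
  -- the new kernel vector
  set w : V → ℝ := fun v => if h : v = i then 1 else -(y ⟨v, h⟩) with hw
  have hwi : w i = 1 := by simp [hw]
  have hws : ∀ s : {v : V // v ≠ i}, w ↑s = -(y s) := by
    intro s; simp [hw, s.prop]
  have hAw : ∀ s : {v : V // v ≠ i}, A.mulVec w ↑s = 0 := by
    intro s
    rw [mulVec_split A i w ↑s, hwi, mul_one]
    have hBy := congrFun hy s
    rw [hB, deleteRC_mulVec] at hBy
    have : ∑ s' : {v : V // v ≠ i}, A ↑s ↑s' * w ↑s'
        = -∑ s' : {v : V // v ≠ i}, A ↑s ↑s' * y s' := by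
      rw [← Finset.sum_neg_distrib]
      exact Finset.sum_congr rfl (fun s' _ => by rw [hws s']; ring)
    rw [this, hBy]
    ring
  set t : ℝ := -(A.mulVec w i) with ht
  refine ⟨t, ?_⟩
  set A' := A + t • Matrix.single i i (1:ℝ) with hA'
  have hwker : A'.mulVec w = 0 := by
    funext v
    rw [hA', mulVec_add_smul_std]
    by_cases hv : v = i
    · subst hv
      simp [hwi, ht]
    · simp [Pi.single_apply, hv, hAw ⟨v, hv⟩]
  have hsub : ∀ x ∈ LinearMap.ker A.mulVecLin, x ∈ LinearMap.ker A'.mulVecLin := by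
    intro x hxm
    rw [LinearMap.mem_ker, Matrix.mulVecLin_apply, hA', mulVec_add_smul_std,
      hvan x hxm]
    have : A.mulVec x = 0 := by simpa using hxm
    simp [this]
  -- lower bound
  have hwker' : w ∈ LinearMap.ker A'.mulVecLin := by
    rw [LinearMap.mem_ker, Matrix.mulVecLin_apply]; exact hwker
  let g0 : (↥(LinearMap.ker A.mulVecLin) × ℝ) →ₗ[ℝ] (V → ℝ) :=
    ((LinearMap.ker A.mulVecLin).subtype).coprod (LinearMap.toSpanSingleton ℝ (V → ℝ) w)
  have hg0mem : ∀ p, g0 p ∈ LinearMap.ker A'.mulVecLin := by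
    rintro ⟨xx, a⟩
    exact Submodule.add_mem _ (hsub xx.val xx.2) (Submodule.smul_mem _ a hwker')
  let g : (↥(LinearMap.ker A.mulVecLin) × ℝ) →ₗ[ℝ] ↥(LinearMap.ker A'.mulVecLin) :=
    LinearMap.codRestrict _ g0 hg0mem
  have hginj : Function.Injective g := by
    rw [injective_iff_map_eq_zero]
    rintro ⟨xx, a⟩ hxa
    have hval : xx.val + a • w = 0 := by
      have := congrArg Subtype.val hxa
      simpa [g, g0, LinearMap.coprod_apply, LinearMap.toSpanSingleton_apply] using this
    have ha : a = 0 := by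
      have := congrFun hval i
      simp only [Pi.add_apply, Pi.smul_apply, Pi.zero_apply, smul_eq_mul,
        hvan xx.val xx.2, hwi, mul_one, zero_add] at this
      exact this
    subst ha
    have : xx = 0 := by
      apply Subtype.ext
      simpa using hval
    simp [this]
  have hlow := LinearMap.finrank_le_finrank_of_injective hginj
  rw [Module.finrank_prod, Module.finrank_self] at hlow
  have e1 : Module.finrank ℝ ↥(LinearMap.ker A.mulVecLin) = k := h1
  -- upper bound
  have hup1 := finrank_le_inf_add_one i (LinearMap.ker A'.mulVecLin)
  have hup2 := finrank_inf_le i A'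
  have hup3 : nullity (deleteRC A' i) = k := by
    rw [hA', deleteRC_add_smul_std, ← hB, h2]
  have : nullity A' = Module.finrank ℝ ↥(LinearMap.ker A'.mulVecLin) := rfl
  rw [this]
  omega

lemma k1k_nullity (i : V) (A : Matrix V V ℝ) (hA : A.IsSymm) {k : ℕ}
    (h1 : nullity A = k + 1) (h2 : nullity (deleteRC A i) = k) :
    nullity (A + (1:ℝ) • Matrix.single i i (1:ℝ)) = k := by
  -- there is a kernel vector not vanishing at i
  have hz : ∃ z ∈ LinearMap.ker A.mulVecLin, z i ≠ 0 := by
    by_contra hc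
    push_neg at hc
    have hinf : LinearMap.ker A.mulVecLin ⊓
        LinearMap.ker (LinearMap.proj i : (V → ℝ) →ₗ[ℝ] ℝ) = LinearMap.ker A.mulVecLin := by
      rw [inf_eq_left]
      intro x hx
      rw [LinearMap.mem_ker]
      exact hc x hx
    have := finrank_inf_le i A
    rw [hinf] at this
    have e1 : Module.finrank ℝ ↥(LinearMap.ker A.mulVecLin) = k + 1 := h1
    omega
  obtain ⟨z, hzk, hzi⟩ := hz
  have hz' : A.mulVec z = 0 := hzk
  set A' := A + (1:ℝ) • Matrix.single i i (1:ℝ) with hA'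
  have hkerA' : LinearMap.ker A'.mulVecLin = LinearMap.ker A.mulVecLin ⊓
      LinearMap.ker (LinearMap.proj i : (V → ℝ) →ₗ[ℝ] ℝ) := by
    ext x
    simp only [Submodule.mem_inf, LinearMap.mem_ker]
    constructor
    · intro hx
      have hx' : A.mulVec x + ((1:ℝ) * x i) • (Pi.single i 1 : V → ℝ) = 0 := by
        rw [← mulVec_add_smul_std, ← hA']
        exact hx
      have hxi : x i = 0 := by
        have hd := congrArg (fun u => z ⬝ᵥ u) hx'
        simp only [dotProduct_add, dotProduct_smul, dotProduct_single,
          dotProduct_zero, smul_eq_mul, mul_one, one_mul] at hd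
        have hzA : z ⬝ᵥ A.mulVec x = 0 := by
          rw [Matrix.dotProduct_mulVec]
          have : z ᵥ* A = A.mulVec z := by
            conv_lhs => rw [← hA]
            exact Matrix.vecMul_transpose A z
          rw [this, hz']
          simp
        rw [hzA, zero_add] at hd
        rcases mul_eq_zero.mp hd with h | h
        · exact h
        · exact absurd h hzi
      constructor
      · have : A.mulVec x = 0 := by
          rw [hxi] at hx'
          simpa using hx'
        exact this
      · exact hxi
    · rintro ⟨hx1, hx2⟩
      show A'.mulVec x = 0
      rw [hA', mulVec_add_smul_std]
      change A.mulVec x = 0 at hx1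
      change x i = 0 at hx2
      simp [hx1, hx2]
  have heq := finrank_inf_add_one i (LinearMap.ker A.mulVecLin) z hzk hzi
  have e1 : Module.finrank ℝ ↥(LinearMap.ker A.mulVecLin) = k + 1 := h1
  have : nullity A' = Module.finrank ℝ ↥(LinearMap.ker A'.mulVecLin) := rfl
  rw [this, hkerA']
  omega

end Aux

/-- `(G,i)` realizes the nullity pair `(k,k)` iff it realizes `(k+1,k)`. -/
theorem stmt1 {n : ℕ} (G : SimpleGraph (Fin n)) (i : Fin n) (k : ℕ) :
    (∃ A : Matrix (Fin n) (Fin n) ℝ, InSG G A ∧ nullity A = k ∧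
        nullity (deleteRC A i) = k) ↔
      (∃ A' : Matrix (Fin n) (Fin n) ℝ, InSG G A' ∧ nullity A' = k + 1 ∧
        nullity (deleteRC A' i) = k) := by
  constructor
  · rintro ⟨A, hG, h1, h2⟩
    obtain ⟨t, ht⟩ := kk_exists i A hG.1 h1 h2
    exact ⟨A + t • Matrix.single i i 1, InSG_add_smul_std hG i t, ht,
      by rw [deleteRC_add_smul_std]; exact h2⟩
  · rintro ⟨A', hG, h1, h2⟩
    exact ⟨A' + (1:ℝ) • Matrix.single i i 1, InSG_add_smul_std hG i 1,
      k1k_nullity i A' hG.1 h1 h2, by rw [deleteRC_add_smul_std]; exact h2⟩
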